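/- Let R be a commutative ring and let f₁, ..., fₙ ∈ R generate the unit ideal. Then the sequence 0 → R → ⊕ᵢ R[1/fᵢ] → ⊕ᵢⱼ R[1/fᵢfⱼ] is exact, where the first map sends r to its images in each localization, and the second sends (rᵢ) to the element whose (i,j) component is the image of rᵢ minus the image of rⱼ in R[1/fᵢfⱼ]. -/

import Mathlib

/-- The natural map `R[1/a] → R[1/(a*b)]`. -/
noncomputable def awayToLeft (R : Type u) [CommRing R] (a b : R) :
    Localization.Away a →+* Localization.Away (a * b) :=
  Localization.awayLift (algebraMap R (Localization.Away (a * b))) a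
    (isUnit_of_mul_isUnit_left (y := algebraMap R (Localization.Away (a * b)) b)
      (by rw [← map_mul]
          exact IsLocalization.map_units _ ⟨a * b, Submonoid.mem_powers _⟩))

/-- The natural map `R[1/b] → R[1/(a*b)]`. -/
noncomputable def awayToRight (R : Type u) [CommRing R] (a b : R) :
    Localization.Away b →+* Localization.Away (a * b) :=
  Localization.awayLift (algebraMap R (Localization.Away (a * b))) b
    (isUnit_of_mul_isUnit_right (x := algebraMap R (Localization.Away (a * b)) a)
      (by rw [← map_mul]
          exact IsLocalization.map_units _ ⟨a * b, Submonoid.mem_powers _⟩))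

universe u

section Helpers

variable {R : Type u} [CommRing R]

example (a b : R) : awayToLeft R a b = IsLocalization.Away.awayToAwayRight a b := rfl
example (a b : R) : awayToRight R a b = IsLocalization.Away.awayToAwayLeft b a := rfl

lemma awayToLeft_alg (a b : R) (x : R) :
    awayToLeft R a b (algebraMap R (Localization.Away a) x)
      = algebraMap R (Localization.Away (a * b)) x := IsLocalization.lift_eq _ _

lemma awayToRight_alg (a b : R) (x : R) :
    awayToRight R a b (algebraMap R (Localization.Away b) x)
      = algebraMap R (Localization.Away (a * b)) x := IsLocalization.lift_eq _ _

lemma away_of_away_mul_self (a : R) (T : Type u) [CommRing T] [Algebra R T]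
    [IsLocalization.Away (a * a) T] : IsLocalization.Away a T := by
  have hu : IsUnit (algebraMap R T a) := by
    apply isUnit_of_mul_isUnit_left (y := algebraMap R T a)
    rw [← map_mul]
    exact IsLocalization.map_units _ ⟨a * a, Submonoid.mem_powers _⟩
  constructor
  constructor
  · rintro ⟨y, m, rfl⟩
    simpa using hu.pow m
  · intro z
    obtain ⟨⟨r, ⟨_, m, rfl⟩⟩, hz⟩ := IsLocalization.surj (Submonoid.powers (a * a)) z
    refine ⟨⟨r, ⟨a ^ (2 * m), ⟨2 * m, rfl⟩⟩⟩, ?_⟩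
    have : (a * a) ^ m = a ^ (2 * m) := by rw [two_mul, pow_add, mul_pow]
    simpa [← this] using hz
  · intro x y hxy
    obtain ⟨⟨_, m, rfl⟩, hc⟩ := IsLocalization.exists_of_eq (M := Submonoid.powers (a * a)) hxy
    refine ⟨⟨a ^ (2 * m), ⟨2 * m, rfl⟩⟩, ?_⟩
    have : (a * a) ^ m = a ^ (2 * m) := by rw [two_mul, pow_add, mul_pow]
    simpa [← this] using hc

lemma liftInjective (a : R) (T : Type u) [CommRing T] [Algebra R T]
    [IsLocalization.Away a T] (g : Localization.Away a →+* T)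
    (hg : ∀ x, g (algebraMap R (Localization.Away a) x) = algebraMap R T x) :
    Function.Injective g := by
  have he : g = ((IsLocalization.algEquiv (Submonoid.powers a)
      (Localization.Away a) T).toAlgHom.toRingHom) := by
    apply IsLocalization.ringHom_ext (Submonoid.powers a)
    ext x
    simp [hg]
  rw [he]
  exact (IsLocalization.algEquiv (Submonoid.powers a) (Localization.Away a) T).injective

lemma cast_alg_iff {a b : R} (e : a = b) (x : Localization.Away a) (r : R) :
    algebraMap R (Localization.Away b) r = e ▸ x ↔
      algebraMap R (Localization.Away a) r = x := by subst e; rfl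

lemma compat_cast {n : ℕ} (f : Fin n → R) (s : ∀ i : Fin n, Localization.Away (f i))
    (h : ∀ i j, awayToLeft R (f i) (f j) (s i) = awayToRight R (f i) (f j) (s j))
    {a b : R} {i j : Fin n} (ei : f i = a) (ej : f j = b) :
    IsLocalization.Away.awayToAwayRight (S := Localization.Away a)
        (P := Localization.Away (a * b)) a b (ei ▸ s i) =
      IsLocalization.Away.awayToAwayLeft (S := Localization.Away b) b a (ej ▸ s j) := by
  subst ei; subst ej; exact h i j

lemma final_step {n : ℕ} (f : Fin n → R) (s : ∀ i : Fin n, Localization.Away (f i))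
    (h : ∀ i j, awayToLeft R (f i) (f j) (s i) = awayToRight R (f i) (f j) (s j))
    {i j : Fin n} (e : f j = f i) (r : R)
    (hr' : algebraMap R (Localization.Away (f j)) r = s j) :
    algebraMap R (Localization.Away (f i)) r = s i := by
  haveI inst : IsLocalization.Away (f i * f i) (Localization.Away (f j * f i)) := by
    rw [show f i * f i = f j * f i by rw [e]]; infer_instance
  haveI := away_of_away_mul_self (f i) (Localization.Away (f j * f i))
  have inj := liftInjective (f i) (Localization.Away (f j * f i))
    (awayToRight R (f j) (f i)) (fun x => awayToRight_alg (f j) (f i) x)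
  apply inj
  rw [awayToRight_alg, ← h j i, ← hr', awayToLeft_alg]

end Helpers

/-- Stacks project Tag 00EJ: if `f 0, …, f (n-1)` generate the unit ideal of `R`, then
`0 → R → ⊕ᵢ R[1/fᵢ] → ⊕ᵢⱼ R[1/fᵢfⱼ]` is exact: the map `R → ⊕ᵢ R[1/fᵢ]` is injective,
and a family `(sᵢ)` has matching images in every `R[1/fᵢfⱼ]` iff it comes from some
`r : R`. -/
theorem tag00EJ (R : Type u) [CommRing R] (n : ℕ) (f : Fin n → R)
    (hf : Ideal.span (Set.range f) = ⊤) :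
    Function.Injective (fun (r : R) (i : Fin n) => algebraMap R (Localization.Away (f i)) r) ∧
    ∀ s : ∀ i : Fin n, Localization.Away (f i),
      ((∀ i j, awayToLeft R (f i) (f j) (s i) = awayToRight R (f i) (f j) (s j)) ↔
        ∃ r : R, ∀ i, algebraMap R (Localization.Away (f i)) r = s i) := by
  constructor
  · intro r r' hrr'
    apply Localization.algebraMap_injective_of_span_eq_top _ hf
    funext a
    obtain ⟨v, hv⟩ := a
    show algebraMap R (Localization.Away v) r = algebraMap R (Localization.Away v) r'
    obtain ⟨i, rfl⟩ := hv
    exact congrFun hrr' i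
  · intro s
    constructor
    · intro h
      obtain ⟨r, hr, -⟩ := Localization.existsUnique_algebraMap_eq_of_span_eq_top _ hf
        (fun a : Set.range f => a.2.choose_spec ▸ s a.2.choose)
        (fun a b => compat_cast f s h a.2.choose_spec b.2.choose_spec)
      refine ⟨r, fun i => ?_⟩
      have hmem : f i ∈ Set.range f := ⟨i, rfl⟩
      have := hr ⟨f i, hmem⟩
      have hr' := (cast_alg_iff hmem.choose_spec (s hmem.choose) r).mp this
      exact final_step f s h hmem.choose_spec r hr'
    · rintro ⟨r, hr⟩ i j
      rw [← hr i, ← hr j, awayToLeft_alg, awayToRight_alg]
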